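/- Let E(X) = X^n − λ with λ an even integer, φ a power of 2, and M ∈ Z[X] of degree < n with constant coefficient m_0. Then M is invertible in the quotient ring Z[X]/(E, φ) if and only if m_0 is odd. -/

import Mathlib

open Polynomial

/-- for `E = X^n - λ` with `λ` even and `φ = 2^k` (`k ≥ 1`), a polynomial
`M` of degree `< n` is invertible in `ℤ[X]/(E, φ)` iff its constant coefficient is odd. -/
theorem isUnit_mod_E_phi_iff_const_odd (n : ℕ) (hn : 1 ≤ n) (lam : ℤ) (hlam : Even lam)
    (k : ℕ) (hk : 1 ≤ k) (φ : ℤ) (hφ : φ = 2 ^ k)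
    (M : Polynomial ℤ) (hM : M.natDegree < n) :
    IsUnit (Ideal.Quotient.mk
        (Ideal.span ({(X : Polynomial ℤ) ^ n - C lam, C φ} : Set (Polynomial ℤ))) M)
      ↔ Odd (M.coeff 0) := by
  set I := Ideal.span ({(X : Polynomial ℤ) ^ n - C lam, C φ} : Set (Polynomial ℤ)) with hI
  have hE : ((X : Polynomial ℤ) ^ n - C lam) ∈ I := Ideal.subset_span (by simp)
  have hφI : (C φ : Polynomial ℤ) ∈ I := Ideal.subset_span (by simp)
  have mk2nil : IsNilpotent (Ideal.Quotient.mk I (C 2)) := by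
    refine ⟨k, ?_⟩
    rw [← map_pow, ← C_pow, ← hφ, Ideal.Quotient.eq_zero_iff_mem]
    exact hφI
  constructor
  · intro h
    let f : Polynomial ℤ →+* ZMod 2 := (Int.castRingHom (ZMod 2)).comp (evalRingHom 0)
    have hker : ∀ a ∈ I, f a = 0 := by
      intro a ha
      rw [hI, Ideal.mem_span_pair] at ha
      obtain ⟨b, c, rfl⟩ := ha
      have h2lam : ((lam : ZMod 2)) = 0 :=
        (ZMod.intCast_zmod_eq_zero_iff_dvd lam 2).2 hlam.two_dvd
      have h2φ : ((φ : ZMod 2)) = 0 := by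
        rw [hφ]; push_cast
        rw [show ((2 : ZMod 2)) = 0 by decide]
        exact zero_pow (by omega)
      simp [f, zero_pow (by omega : n ≠ 0), h2lam, h2φ]
    have hu : IsUnit ((Ideal.Quotient.lift I f hker) (Ideal.Quotient.mk I M)) := h.map _
    rw [Ideal.Quotient.lift_mk] at hu
    have : f M = ((M.coeff 0 : ℤ) : ZMod 2) := by
      simp [f, ← Polynomial.coeff_zero_eq_eval_zero]
    rw [this] at hu
    have hne : ((M.coeff 0 : ℤ) : ZMod 2) ≠ 0 := hu.ne_zero
    rw [Ne, ZMod.intCast_zmod_eq_zero_iff_dvd] at hne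
    exact Int.not_even_iff_odd.1 (fun he => hne he.two_dvd)
  · intro h
    obtain ⟨t, ht⟩ := h
    -- X is nilpotent in the quotient
    obtain ⟨μ, hμ⟩ := hlam
    have hXn : Ideal.Quotient.mk I ((X : Polynomial ℤ) ^ n) =
        Ideal.Quotient.mk I (C 2 * C μ) := by
      rw [Ideal.Quotient.eq]
      have : (X : Polynomial ℤ) ^ n - C 2 * C μ = X ^ n - C lam := by
        rw [← C_mul, hμ]; ring_nf
      rw [this]; exact hE
    have mkXnil : IsNilpotent (Ideal.Quotient.mk I (X : Polynomial ℤ)) := by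
      have : IsNilpotent (Ideal.Quotient.mk I (X : Polynomial ℤ) ^ n) := by
        rw [← map_pow, hXn, map_mul]
        exact (Commute.all _ _).isNilpotent_mul_right mk2nil
      exact this.of_pow
    -- M = C m0 + X * Q
    have hXdvd : (X : Polynomial ℤ) ∣ (M - C (M.coeff 0)) := by
      rw [Polynomial.X_dvd_iff]; simp
    obtain ⟨Q, hQ⟩ := hXdvd
    have hsplit : M = C (M.coeff 0) + X * Q := by
      rw [← hQ]; ring
    have hnil : IsNilpotent (Ideal.Quotient.mk I (C (2 * t) + X * Q)) := by
      rw [map_add]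
      refine (Commute.all _ _).isNilpotent_add ?_ ?_
      · have : (C (2 * t) : Polynomial ℤ) = C 2 * C t := by rw [← C_mul]
        rw [this, map_mul]
        exact (Commute.all _ _).isNilpotent_mul_right mk2nil
      · rw [map_mul]
        exact (Commute.all _ _).isNilpotent_mul_right mkXnil
    have : Ideal.Quotient.mk I M = 1 + Ideal.Quotient.mk I (C (2 * t) + X * Q) := by
      rw [hsplit, ht]
      push_cast
      rw [map_add, map_add]
      simp [C_add, C_mul]
      ring
    rw [this]
    exact hnil.isUnit_one_add
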